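/- Local quadratic lower bound for the symmetrized Bregman divergence (Lemma 9 of the paper): under the listed hypotheses, for every α₁₁ ∈ ℝ^{1+q₂}, writing b = α₁₁ − ᾱ₁₁, one has bᵀ·Ẽ[ Z·w(γ̂)·ψ_D(α̂₁ᵀg)·( ψ_Y(α₁₁ᵀh) − ψ_Y(ᾱ₁₁ᵀh) )·h ] ≥ C_{g3}·C_{h3} · ( (1 − exp(−C_{h2}·C_{h0}·‖b‖₁)） / (C_{h2}·C_{h0}·‖b‖₁) ) · bᵀΣ̃_h b, where the ratio is interpreted as 1 when b = 0, C_{g3} = exp(−C_{f0}·r_γ)·ψ_D(−C_{g1})·(1−ϱ₄), C_{h3} = ψ_Y′(0)·exp(−C_{h2}·C_{h1}), and Σ̃_h = Ẽ[ Z·w(γ̄)·h·hᵀ ]. -/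

import Mathlib

open Finset

private lemma monoOn_aux {f f' : ℝ → ℝ} {s : Set ℝ} (hs : Convex ℝ s)
    (hf : ∀ x, HasDerivAt f (f' x) x) (h0 : ∀ x ∈ s, 0 ≤ f' x) : MonotoneOn f s := by
  refine monotoneOn_of_deriv_nonneg hs
    ((Differentiable.continuous fun x => (hf x).differentiableAt).continuousOn)
    (fun x _ => (hf x).differentiableAt.differentiableWithinAt) (fun x hx => ?_)
  rw [(hf x).deriv]
  exact h0 x (interior_subset hx)

private lemma nonneg_aux {ψ : ℝ → ℝ} (hm : Monotone ψ)
    (hlim : Filter.Tendsto ψ Filter.atBot (nhds 0)) (x : ℝ) : 0 ≤ ψ x :=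
  le_of_tendsto hlim (Filter.eventually_atBot.2 ⟨x, fun _ hy => hm hy⟩)

private lemma slope_aux {x y : ℝ} (hx : 0 < x) (hxy : x ≤ y) :
    (1 - Real.exp (-y)) / y ≤ (1 - Real.exp (-x)) / x := by
  have hy : 0 < y := lt_of_lt_of_le hx hxy
  rw [div_le_div_iff₀ hy hx]
  have ha : (0:ℝ) ≤ x / y := by positivity
  have hb : (0:ℝ) ≤ 1 - x / y := by
    rw [sub_nonneg]; exact (div_le_one hy).2 hxy
  have hconv := convexOn_exp.2 (Set.mem_univ (-y)) (Set.mem_univ 0) ha hb (by ring)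
  simp only [smul_eq_mul, mul_zero, add_zero, Real.exp_zero, mul_one] at hconv
  have h1 : x / y * -y = -x := by field_simp
  rw [h1] at hconv
  have ht : x / y * y = x := div_mul_cancel₀ x hy.ne'
  have h2 := mul_le_mul_of_nonneg_right hconv hy.le
  have h3 : (x / y * Real.exp (-y) + (1 - x / y)) * y = x * Real.exp (-y) + y - x := by
    field_simp; ring
  rw [h3] at h2
  nlinarith
private lemma derivD_aux {ψ ψ' : ℝ → ℝ} {C : ℝ} (hC : 0 < C)
    (hψ : ∀ x, HasDerivAt ψ (ψ' x) x) (h0 : ∀ x, 0 ≤ ψ' x)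
    (hratio : ∀ u v : ℝ, ψ' u ≤ ψ' v * Real.exp (C * |u - v|))
    (hlim : Filter.Tendsto ψ Filter.atBot (nhds 0))
    {t v : ℝ} (htv : t ≤ v) : ψ' t ≤ C * ψ v := by
  have hm : Monotone ψ := monotone_of_hasDerivAt_nonneg hψ h0
  have hnn : ∀ x, 0 ≤ ψ x := nonneg_aux hm hlim
  set c : ℝ := ψ' t / C with hc
  have hcC : c * C = ψ' t := div_mul_cancel₀ _ hC.ne'
  have hF : ∀ T : ℝ, HasDerivAt (fun T => ψ t - ψ (t - T) - c * (1 - Real.exp (-(C * T))))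
      (ψ' (t - T) - c * C * Real.exp (-(C * T))) T := by
    intro T
    have h1 : HasDerivAt (fun T : ℝ => t - T) (-1) T := (hasDerivAt_id T).const_sub t
    have h2 : HasDerivAt (fun T => ψ (t - T)) (ψ' (t - T) * (-1)) T := (hψ (t - T)).comp T h1
    have h3 : HasDerivAt (fun T : ℝ => -(C * T)) (-C) T := by
      exact ((hasDerivAt_id T).const_mul C).neg.congr_deriv (by ring)
    have h4 : HasDerivAt (fun T => Real.exp (-(C * T))) (Real.exp (-(C * T)) * (-C)) T := h3.exp
    have h5 := ((h2.const_sub (ψ t)).sub ((h4.const_sub 1).const_mul c))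
    exact h5.congr_deriv (by ring)
  have hmono : MonotoneOn (fun T => ψ t - ψ (t - T) - c * (1 - Real.exp (-(C * T))))
      (Set.Ici (0:ℝ)) := by
    refine monoOn_aux (convex_Ici 0) hF fun T hT => ?_
    have hr := hratio t (t - T)
    have habs : |t - (t - T)| = T := by
      rw [abs_of_nonneg (by simpa using hT : (0:ℝ) ≤ t - (t - T))]; ring
    rw [habs] at hr
    have := mul_le_mul_of_nonneg_right hr (Real.exp_pos (-(C * T))).le
    rw [mul_assoc, ← Real.exp_add] at this
    simp only [add_neg_cancel, Real.exp_zero, mul_one] at this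
    rw [hcC]
    linarith
  have hle : ∀ T : ℝ, 0 ≤ T → c * (1 - Real.exp (-(C * T))) ≤ ψ v := by
    intro T hT
    have := hmono (Set.self_mem_Ici) (Set.mem_Ici.2 hT) hT
    simp only [sub_zero, mul_zero, neg_zero, Real.exp_zero, sub_self, mul_zero] at this
    have h6 : ψ t ≤ ψ v := hm htv
    have h7 : 0 ≤ ψ (t - T) := hnn _
    linarith
  have htend : Filter.Tendsto (fun T => c * (1 - Real.exp (-(C * T)))) Filter.atTop (nhds c) := by
    have h8 : Filter.Tendsto (fun T : ℝ => -(C * T)) Filter.atTop Filter.atBot := by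
      apply Filter.tendsto_neg_atTop_atBot.comp
      exact Filter.Tendsto.const_mul_atTop hC Filter.tendsto_id
    have h9 : Filter.Tendsto (fun T : ℝ => Real.exp (-(C * T))) Filter.atTop (nhds 0) :=
      Real.tendsto_exp_atBot.comp h8
    have h10 : Filter.Tendsto (fun T : ℝ => c * ((1:ℝ) - Real.exp (-(C * T)))) Filter.atTop
        (nhds (c * (1 - 0))) := (Filter.Tendsto.sub tendsto_const_nhds h9).const_mul c
    simpa using h10
  have hcv : c ≤ ψ v :=
    le_of_tendsto htend (Filter.eventually_atTop.2 ⟨0, fun T hT => hle T hT⟩)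
  calc ψ' t = c * C := hcC.symm
    _ ≤ ψ v * C := mul_le_mul_of_nonneg_right hcv hC.le
    _ = C * ψ v := mul_comm _ _

private lemma gapD_aux {ψ ψ' : ℝ → ℝ} {C : ℝ} (hC : 0 < C)
    (hψ : ∀ x, HasDerivAt ψ (ψ' x) x) (h0 : ∀ x, 0 ≤ ψ' x)
    (hratio : ∀ u v : ℝ, ψ' u ≤ ψ' v * Real.exp (C * |u - v|))
    (hlim : Filter.Tendsto ψ Filter.atBot (nhds 0))
    {u v Δ : ℝ} (hΔ0 : 0 ≤ Δ) (huv : v - Δ ≤ u) :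
    (1 - C * Δ) * ψ v ≤ ψ u := by
  have hm : Monotone ψ := monotone_of_hasDerivAt_nonneg hψ h0
  have hnn : ∀ x, 0 ≤ ψ x := nonneg_aux hm hlim
  rcases le_total v u with h | h
  · have h1 : ψ v ≤ ψ u := hm h
    nlinarith [hnn v, mul_nonneg (mul_nonneg hC.le hΔ0) (hnn v)]
  · -- u ≤ v
    have hK : MonotoneOn (fun s => (C * ψ v) * s - ψ s) (Set.Iic v) := by
      refine monoOn_aux (f' := fun s => C * ψ v - ψ' s) (convex_Iic v) (fun s => ?_)
        (fun s hs => ?_)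
      · have := ((hasDerivAt_id s).const_mul (C * ψ v)).sub (hψ s)
        exact this.congr_deriv (by ring)
      · have := derivD_aux hC hψ h0 hratio hlim (Set.mem_Iic.1 hs)
        show 0 ≤ C * ψ v - ψ' s
        linarith
    have h2 := hK (Set.mem_Iic.2 h) (Set.mem_Iic.2 (le_refl v)) h
    simp only at h2
    -- C ψv * u - ψ u ≤ C ψv * v - ψ v
    have h3 : v - u ≤ Δ := by linarith
    nlinarith [mul_le_mul_of_nonneg_left h3 (mul_nonneg hC.le (hnn v))]

private lemma gapY_aux {ψ ψ' : ℝ → ℝ} {C : ℝ} (hC : 0 < C)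
    (hψ : ∀ x, HasDerivAt ψ (ψ' x) x)
    {u v c : ℝ} (hc0 : 0 ≤ c)
    (hlow : ∀ s : ℝ, c * Real.exp (-(C * |s - v|)) ≤ ψ' s) :
    (c / C) * (1 - Real.exp (-(C * |u - v|))) * |u - v| ≤ (ψ u - ψ v) * (u - v) := by
  rcases le_total v u with h | h
  · have habs : |u - v| = u - v := abs_of_nonneg (by linarith)
    rw [habs]
    have hG : MonotoneOn (fun s => ψ s + (c / C) * Real.exp (-(C * (s - v)))) (Set.Ici v) := by
      refine monoOn_aux (f' := fun s => ψ' s - c * Real.exp (-(C * (s - v))))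
        (convex_Ici v) (fun s => ?_) (fun s hs => ?_)
      · have h1 : HasDerivAt (fun s : ℝ => -(C * (s - v))) (-C) s := by
          exact (((hasDerivAt_id s).sub_const v).const_mul C).neg.congr_deriv (by ring)
        have h2 := (h1.exp.const_mul (c / C)).add_const 0
        have h3 := (hψ s).add (h1.exp.const_mul (c / C))
        exact h3.congr_deriv (by field_simp [hC.ne']; ring)
      · have := hlow s
        rw [abs_of_nonneg (by simpa using hs : (0:ℝ) ≤ s - v)] at this
        show 0 ≤ ψ' s - c * Real.exp (-(C * (s - v)))
        linarith
    have h4 := hG (Set.self_mem_Ici) (Set.mem_Ici.2 h) h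
    simp only [sub_self, mul_zero, neg_zero, Real.exp_zero, mul_one] at h4
    have h5 : (c / C) * (1 - Real.exp (-(C * (u - v)))) ≤ ψ u - ψ v := by linarith
    have h6 := mul_le_mul_of_nonneg_right h5 (by linarith : (0:ℝ) ≤ u - v)
    linarith
  · have habs : |u - v| = v - u := by rw [abs_sub_comm]; exact abs_of_nonneg (by linarith)
    rw [habs]
    have hG : MonotoneOn (fun s => ψ s - (c / C) * Real.exp (-(C * (v - s)))) (Set.Iic v) := by
      refine monoOn_aux (f' := fun s => ψ' s - c * Real.exp (-(C * (v - s))))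
        (convex_Iic v) (fun s => ?_) (fun s hs => ?_)
      · have h1 : HasDerivAt (fun s : ℝ => -(C * (v - s))) C s := by
          exact (((hasDerivAt_id s).const_sub v).const_mul C).neg.congr_deriv (by ring)
        have h3 := (hψ s).sub (h1.exp.const_mul (c / C))
        exact h3.congr_deriv (by field_simp [hC.ne'])
      · have := hlow s
        rw [abs_sub_comm, abs_of_nonneg (by simpa using hs : (0:ℝ) ≤ v - s)] at this
        show 0 ≤ ψ' s - c * Real.exp (-(C * (v - s)))
        linarith
    have h4 := hG (Set.mem_Iic.2 h) (Set.self_mem_Iic) h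
    simp only [sub_self, mul_zero, neg_zero, Real.exp_zero, mul_one] at h4
    have h5 : (c / C) * (1 - Real.exp (-(C * (v - u)))) ≤ ψ v - ψ u := by linarith
    have h6 := mul_le_mul_of_nonneg_right h5 (by linarith : (0:ℝ) ≤ v - u)
    nlinarith [h6]

private lemma l1_bound0 {m : ℕ} (a x : Fin m → ℝ) (C : ℝ) (hC : ∀ j, |x j| ≤ C) :
    |∑ j, a j * x j| ≤ C * ∑ j, |a j| := by
  calc |∑ j, a j * x j| ≤ ∑ j, |a j * x j| := Finset.abs_sum_le_sum_abs _ _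
    _ ≤ ∑ j, |a j| * C := Finset.sum_le_sum fun j _ => by
        rw [abs_mul]; exact mul_le_mul_of_nonneg_left (hC j) (abs_nonneg _)
    _ = (∑ j, |a j|) * C := by rw [Finset.sum_mul]
    _ = C * ∑ j, |a j| := mul_comm _ _

private lemma l1_bound {m : ℕ} (a a' x : Fin m → ℝ) (C r : ℝ) (hC : ∀ j, |x j| ≤ C)
    (hC0 : 0 ≤ C) (hr : ∑ j, |a j - a' j| ≤ r) :
    |∑ j, a j * x j - ∑ j, a' j * x j| ≤ C * r := by
  have h1 : ∑ j, a j * x j - ∑ j, a' j * x j = ∑ j, (a j - a' j) * x j := by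
    rw [← Finset.sum_sub_distrib]
    exact Finset.sum_congr rfl fun j _ => by ring
  rw [h1]
  calc |∑ j, (a j - a' j) * x j| ≤ C * ∑ j, |a j - a' j| := l1_bound0 _ _ _ hC
    _ ≤ C * r := mul_le_mul_of_nonneg_left hr hC0

private lemma sum_rearr1 {n m : ℕ} (b : Fin m → ℝ) (c : Fin n → ℝ) (h : Fin n → Fin m → ℝ)
    (t : ℝ) :
    ∑ j, b j * (t * ∑ i, c i * h i j) = t * ∑ i, c i * ∑ j, b j * h i j := by
  simp only [Finset.mul_sum]
  rw [Finset.sum_comm]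
  exact Finset.sum_congr rfl fun i _ => Finset.sum_congr rfl fun j _ => by ring

private lemma sum_rearr2 {n m : ℕ} (b : Fin m → ℝ) (c : Fin n → ℝ) (h : Fin n → Fin m → ℝ)
    (t : ℝ) :
    ∑ j, ∑ k, b j * (t * ∑ i, c i * h i j * h i k) * b k
      = t * ∑ i, c i * ((∑ j, b j * h i j) * (∑ j, b j * h i j)) := by
  have step1 : ∀ j, ∑ k, b j * (t * ∑ i, c i * h i j * h i k) * b k
      = ∑ i, (c i * (b j * h i j)) * (t * ∑ k, b k * h i k) := by
    intro j
    simp only [Finset.mul_sum, Finset.sum_mul]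
    rw [Finset.sum_comm]
    exact Finset.sum_congr rfl fun i _ => Finset.sum_congr rfl fun k _ => by ring
  calc ∑ j, ∑ k, b j * (t * ∑ i, c i * h i j * h i k) * b k
      = ∑ j, ∑ i, (c i * (b j * h i j)) * (t * ∑ k, b k * h i k) :=
        Finset.sum_congr rfl fun j _ => step1 j
    _ = ∑ i, ∑ j, (c i * (b j * h i j)) * (t * ∑ k, b k * h i k) := Finset.sum_comm
    _ = t * ∑ i, c i * ((∑ j, b j * h i j) * (∑ j, b j * h i j)) := by
        simp only [Finset.mul_sum, Finset.sum_mul]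
        refine Finset.sum_congr rfl fun i _ => ?_
        rw [Finset.sum_comm]
        exact Finset.sum_congr rfl fun j _ => Finset.sum_congr rfl fun k _ => by ring
set_option maxHeartbeats 2000000 in
theorem stmt_16 (n p q1 q2 : ℕ) (hn : 1 ≤ n)
    (Z : Fin n → ℝ) (hZ : ∀ i, Z i = 0 ∨ Z i = 1)
    (fV : Fin n → Fin (p + 1) → ℝ)
    (gV : Fin n → Fin (q1 + 1) → ℝ)
    (hV : Fin n → Fin (q2 + 1) → ℝ)
    (ψD ψD' ψY ψY' : ℝ → ℝ)
    (hψD : ∀ x, HasDerivAt ψD (ψD' x) x) (hψY : ∀ x, HasDerivAt ψY (ψY' x) x)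
    (hψD' : ∀ x, 0 ≤ ψD' x) (hψY' : ∀ x, 0 ≤ ψY' x)
    (Cg2 Ch2 : ℝ) (hCg2 : 0 < Cg2) (hCh2 : 0 < Ch2)
    (hψDratio : ∀ u v : ℝ, ψD' u ≤ ψD' v * Real.exp (Cg2 * |u - v|))
    (hψYratio : ∀ u v : ℝ, ψY' u ≤ ψY' v * Real.exp (Ch2 * |u - v|))
    (hψDlim : Filter.Tendsto ψD Filter.atBot (nhds 0))
    (γhat γbar : Fin (p + 1) → ℝ)
    (α1hat α1bar : Fin (q1 + 1) → ℝ)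
    (α11bar : Fin (q2 + 1) → ℝ)
    -- bounded covariates and linear predictors
    (Cf0 Cg0 Cg1 Ch0 Ch1 : ℝ)
    (hCf0 : ∀ i j, |fV i j| ≤ Cf0)
    (hCg0 : ∀ i j, |gV i j| ≤ Cg0)
    (hCg1 : ∀ i, |∑ j, α1bar j * gV i j| ≤ Cg1)
    (hCh0 : ∀ i j, |hV i j| ≤ Ch0)
    (hCh1 : ∀ i, |∑ j, α11bar j * hV i j| ≤ Ch1)
    -- weights and the sample matrix
    (what wbar : Fin n → ℝ)
    (hwhat : ∀ i, what i = Real.exp (-(∑ j, γhat j * fV i j)))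
    (hwbar : ∀ i, wbar i = Real.exp (-(∑ j, γbar j * fV i j)))
    (SigTh : Fin (q2 + 1) → Fin (q2 + 1) → ℝ)
    (hSigTh : ∀ j k, SigTh j k = (1 / (n : ℝ)) * ∑ i, Z i * wbar i * hV i j * hV i k)
    -- closeness of the first-stage estimators
    (rγ rα : ℝ) (hrγ0 : 0 ≤ rγ) (hrα0 : 0 ≤ rα)
    (hγL1 : ∑ j, |γhat j - γbar j| ≤ rγ)
    (hα1L1 : ∑ j, |α1hat j - α1bar j| ≤ rα)
    (ϱ4 : ℝ) (hϱ4def : ϱ4 = Cg0 * rα * Cg2 * Real.exp (Cg2 * Cg0 * rα))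
    (hϱ4 : ϱ4 < 1)
    -- the constants of the lemma
    (Cg3 : ℝ) (hCg3 : Cg3 = Real.exp (-(Cf0 * rγ)) * ψD (-Cg1) * (1 - ϱ4))
    (Ch3 : ℝ) (hCh3 : Ch3 = ψY' 0 * Real.exp (-(Ch2 * Ch1))) :
    ∀ α11 : Fin (q2 + 1) → ℝ,
      Cg3 * Ch3 *
          (if (∑ j, |α11 j - α11bar j|) = 0 then 1
            else (1 - Real.exp (-(Ch2 * Ch0 * ∑ j, |α11 j - α11bar j|)))
              / (Ch2 * Ch0 * ∑ j, |α11 j - α11bar j|)) *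
          (∑ j, ∑ k, (α11 j - α11bar j) * SigTh j k * (α11 k - α11bar k))
        ≤ ∑ j, (α11 j - α11bar j) *
            ((1 / (n : ℝ)) * ∑ i, Z i * what i * ψD (∑ l, α1hat l * gV i l)
              * (ψY (∑ l, α11 l * hV i l) - ψY (∑ l, α11bar l * hV i l)) * hV i j) := by

  intro α11
  have hCf0' : 0 ≤ Cf0 := le_trans (abs_nonneg _) (hCf0 ⟨0, hn⟩ 0)
  have hCg0' : 0 ≤ Cg0 := le_trans (abs_nonneg _) (hCg0 ⟨0, hn⟩ 0)
  have hCh0' : 0 ≤ Ch0 := le_trans (abs_nonneg _) (hCh0 ⟨0, hn⟩ 0)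
  have hmD : Monotone ψD := monotone_of_hasDerivAt_nonneg hψD hψD'
  have hψDnn : ∀ x, 0 ≤ ψD x := nonneg_aux hmD hψDlim
  have hϱ40 : 0 ≤ ϱ4 := by
    rw [hϱ4def]
    have := (Real.exp_pos (Cg2 * Cg0 * rα)).le
    nlinarith [mul_nonneg (mul_nonneg hCg0' hrα0) hCg2.le]
  have hCg30 : 0 ≤ Cg3 := by
    rw [hCg3]
    exact mul_nonneg (mul_nonneg (Real.exp_pos _).le (hψDnn _)) (by linarith)
  have hCh30 : 0 ≤ Ch3 := by
    rw [hCh3]; exact mul_nonneg (hψY' 0) (Real.exp_pos _).le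
  set B := ∑ j, |α11 j - α11bar j| with hBdef
  have hB0 : 0 ≤ B := by
    rw [hBdef]; exact Finset.sum_nonneg fun j _ => abs_nonneg _
  by_cases hB : B = 0
  · have hz : ∀ j, α11 j - α11bar j = 0 := by
      intro j
      have h0 := (Finset.sum_eq_zero_iff_of_nonneg
        (fun j _ => abs_nonneg (α11 j - α11bar j))).1 (hBdef.symm.trans hB) j (Finset.mem_univ j)
      exact abs_eq_zero.1 h0
    simp [hz]
  · rw [if_neg hB]
    have hBpos : 0 < B := lt_of_le_of_ne hB0 (Ne.symm hB)
    have hQ : ∑ j, ∑ k, (α11 j - α11bar j) * SigTh j k * (α11 k - α11bar k)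
        = (1 / (n : ℝ)) * ∑ i, Z i * wbar i *
            ((∑ j, (α11 j - α11bar j) * hV i j) * (∑ j, (α11 j - α11bar j) * hV i j)) := by
      have h1 : ∑ j, ∑ k, (α11 j - α11bar j) * SigTh j k * (α11 k - α11bar k)
          = ∑ j, ∑ k, (α11 j - α11bar j) *
              ((1 / (n : ℝ)) * ∑ i, Z i * wbar i * hV i j * hV i k) * (α11 k - α11bar k) := by
        refine Finset.sum_congr rfl fun j _ => Finset.sum_congr rfl fun k _ => ?_
        rw [hSigTh]
      rw [h1]
      exact sum_rearr2 (fun j => α11 j - α11bar j) (fun i => Z i * wbar i) hV (1 / (n : ℝ))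
    have hR : ∑ j, (α11 j - α11bar j) *
          ((1 / (n : ℝ)) * ∑ i, Z i * what i * ψD (∑ l, α1hat l * gV i l)
            * (ψY (∑ l, α11 l * hV i l) - ψY (∑ l, α11bar l * hV i l)) * hV i j)
        = (1 / (n : ℝ)) * ∑ i, Z i * what i * ψD (∑ l, α1hat l * gV i l)
            * (ψY (∑ l, α11 l * hV i l) - ψY (∑ l, α11bar l * hV i l))
            * ∑ j, (α11 j - α11bar j) * hV i j :=
      sum_rearr1 (fun j => α11 j - α11bar j)
        (fun i => Z i * what i * ψD (∑ l, α1hat l * gV i l)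
          * (ψY (∑ l, α11 l * hV i l) - ψY (∑ l, α11bar l * hV i l))) hV (1 / (n : ℝ))
    rw [hQ, hR]
    set κ := (1 - Real.exp (-(Ch2 * Ch0 * B))) / (Ch2 * Ch0 * B) with hκdef
    have hκ0 : 0 ≤ κ := by
      rw [hκdef]
      apply div_nonneg
      · have : Real.exp (-(Ch2 * Ch0 * B)) ≤ 1 := Real.exp_le_one_iff.2
          (neg_nonpos.2 (mul_nonneg (mul_nonneg hCh2.le hCh0') hB0))
        linarith
      · exact mul_nonneg (mul_nonneg hCh2.le hCh0') hB0
    have hL : Cg3 * Ch3 * κ * ((1 / (n : ℝ)) * ∑ i, Z i * wbar i *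
          ((∑ j, (α11 j - α11bar j) * hV i j) * (∑ j, (α11 j - α11bar j) * hV i j)))
        = (1 / (n : ℝ)) * ∑ i, Cg3 * Ch3 * κ * (Z i * wbar i *
            ((∑ j, (α11 j - α11bar j) * hV i j) * (∑ j, (α11 j - α11bar j) * hV i j))) := by
      rw [mul_left_comm, Finset.mul_sum]
    rw [hL]
    refine mul_le_mul_of_nonneg_left (Finset.sum_le_sum fun i _ => ?_) (by positivity)
    rcases hZ i with hZi | hZi
    · simp [hZi]
    · rw [hZi]
      -- first factor bound
      have hwdiff : |∑ j, γhat j * fV i j - ∑ j, γbar j * fV i j| ≤ Cf0 * rγ :=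
        l1_bound γhat γbar (fV i) Cf0 rγ (fun j => hCf0 i j) hCf0' hγL1
      have h1 : wbar i * Real.exp (-(Cf0 * rγ)) ≤ what i := by
        rw [hwhat i, hwbar i, ← Real.exp_add]
        apply Real.exp_le_exp.mpr
        have := (abs_le.mp hwdiff).2
        linarith
      have hgdiff : |∑ l, α1hat l * gV i l - ∑ l, α1bar l * gV i l| ≤ Cg0 * rα :=
        l1_bound α1hat α1bar (gV i) Cg0 rα (fun j => hCg0 i j) hCg0' hα1L1
      have h2' : (1 - Cg2 * (Cg0 * rα)) * ψD (∑ l, α1bar l * gV i l)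
          ≤ ψD (∑ l, α1hat l * gV i l) :=
        gapD_aux hCg2 hψD hψD' hψDratio hψDlim (mul_nonneg hCg0' hrα0)
          (by linarith [(abs_le.mp hgdiff).1])
      have h2'' : ψD (-Cg1) ≤ ψD (∑ l, α1bar l * gV i l) :=
        hmD (by linarith [(abs_le.mp (hCg1 i)).1])
      have hϱge : Cg2 * (Cg0 * rα) ≤ ϱ4 := by
        rw [hϱ4def]
        nlinarith [Real.add_one_le_exp (Cg2 * Cg0 * rα),
          mul_nonneg (mul_nonneg hCg0' hrα0) hCg2.le]
      have h2 : (1 - ϱ4) * ψD (-Cg1) ≤ ψD (∑ l, α1hat l * gV i l) := by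
        calc (1 - ϱ4) * ψD (-Cg1) ≤ (1 - ϱ4) * ψD (∑ l, α1bar l * gV i l) :=
            mul_le_mul_of_nonneg_left h2'' (by linarith)
          _ ≤ (1 - Cg2 * (Cg0 * rα)) * ψD (∑ l, α1bar l * gV i l) :=
            mul_le_mul_of_nonneg_right (by linarith) (hψDnn _)
          _ ≤ _ := h2'
      have hA : Cg3 * wbar i ≤ what i * ψD (∑ l, α1hat l * gV i l) := by
        have e : Cg3 * wbar i
            = (wbar i * Real.exp (-(Cf0 * rγ))) * ((1 - ϱ4) * ψD (-Cg1)) := by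
          rw [hCg3, hwbar i]; ring
        rw [e]
        exact mul_le_mul h1 h2 (mul_nonneg (by linarith) (hψDnn _))
          (by rw [hwhat]; exact (Real.exp_pos _).le)
      -- second factor bound
      set δi := ∑ j, (α11 j - α11bar j) * hV i j with hδ
      have hδB : |δi| ≤ Ch0 * B := by
        rw [hδ, hBdef]; exact l1_bound0 _ _ _ (fun j => hCh0 i j)
      have hudiff : ∑ l, α11 l * hV i l - ∑ l, α11bar l * hV i l = δi := by
        rw [hδ, ← Finset.sum_sub_distrib]
        exact Finset.sum_congr rfl fun l _ => by ring
      have hlow : ∀ s : ℝ, Ch3 * Real.exp (-(Ch2 * |s - ∑ l, α11bar l * hV i l|)) ≤ ψY' s := by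
        intro s
        have ha1 : |s| ≤ Ch1 + |s - ∑ l, α11bar l * hV i l| := by
          have h' := hCh1 i
          have h'' := abs_add_le (s - ∑ l, α11bar l * hV i l) (∑ l, α11bar l * hV i l)
          simp only [sub_add_cancel] at h''
          linarith
        have hr1 := hψYratio 0 s
        rw [zero_sub, abs_neg] at hr1
        have hr2 := mul_le_mul_of_nonneg_right hr1 (Real.exp_pos (-(Ch2 * |s|))).le
        rw [mul_assoc, ← Real.exp_add] at hr2
        simp only [add_neg_cancel, Real.exp_zero, mul_one] at hr2
        calc Ch3 * Real.exp (-(Ch2 * |s - ∑ l, α11bar l * hV i l|))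
            = ψY' 0 * Real.exp (-(Ch2 * Ch1) + -(Ch2 * |s - ∑ l, α11bar l * hV i l|)) := by
              rw [hCh3, Real.exp_add]; ring
          _ ≤ ψY' 0 * Real.exp (-(Ch2 * |s|)) := by
              apply mul_le_mul_of_nonneg_left _ (hψY' 0)
              apply Real.exp_le_exp.mpr
              nlinarith [mul_le_mul_of_nonneg_left ha1 hCh2.le]
          _ ≤ ψY' s := hr2
      have hYgap : (Ch3 / Ch2) * (1 - Real.exp (-(Ch2 * |δi|))) * |δi|
          ≤ (ψY (∑ l, α11 l * hV i l) - ψY (∑ l, α11bar l * hV i l)) * δi := by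
        have hg := gapY_aux hCh2 hψY hCh30 hlow (u := ∑ l, α11 l * hV i l)
        rw [hudiff] at hg
        exact hg
      have hBineq : Ch3 * (κ * (δi * δi))
          ≤ (ψY (∑ l, α11 l * hV i l) - ψY (∑ l, α11bar l * hV i l)) * δi := by
        rcases eq_or_ne δi 0 with hδ0 | hδ0
        · rw [hδ0]; simp
        · have hδpos : 0 < |δi| := abs_pos.2 hδ0
          have hxy : Ch2 * |δi| ≤ Ch2 * (Ch0 * B) := mul_le_mul_of_nonneg_left hδB hCh2.le
          have hx : 0 < Ch2 * |δi| := mul_pos hCh2 hδpos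
          have hs := slope_aux hx hxy
          have hκle : κ ≤ (1 - Real.exp (-(Ch2 * |δi|))) / (Ch2 * |δi|) := by
            rw [hκdef, mul_assoc Ch2 Ch0 B]
            exact hs
          calc Ch3 * (κ * (δi * δi))
              ≤ Ch3 * (((1 - Real.exp (-(Ch2 * |δi|))) / (Ch2 * |δi|)) * (δi * δi)) := by
                apply mul_le_mul_of_nonneg_left _ hCh30
                exact mul_le_mul_of_nonneg_right hκle (mul_self_nonneg δi)
            _ = (Ch3 / Ch2) * (1 - Real.exp (-(Ch2 * |δi|))) * |δi| := by
                have hne : |δi| ≠ 0 := hδpos.ne'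
                rw [show Ch3 * ((1 - Real.exp (-(Ch2 * |δi|))) / (Ch2 * |δi|) * (δi * δi))
                    = Ch3 / Ch2 * (1 - Real.exp (-(Ch2 * |δi|))) * (δi * δi / |δi|) from by
                  field_simp]
                rw [show δi * δi / |δi| = |δi| from by
                  rw [← abs_mul_abs_self δi, mul_div_assoc, div_self hne, mul_one]]
            _ ≤ _ := hYgap
      have e1 : Cg3 * Ch3 * κ * (1 * wbar i * (δi * δi))
          = (Cg3 * wbar i) * (Ch3 * (κ * (δi * δi))) := by ring
      have e2 : 1 * what i * ψD (∑ l, α1hat l * gV i l)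
            * (ψY (∑ l, α11 l * hV i l) - ψY (∑ l, α11bar l * hV i l)) * δi
          = (what i * ψD (∑ l, α1hat l * gV i l))
            * ((ψY (∑ l, α11 l * hV i l) - ψY (∑ l, α11bar l * hV i l)) * δi) := by ring
      rw [e1, e2]
      exact mul_le_mul hA hBineq
        (mul_nonneg hCh30 (mul_nonneg hκ0 (mul_self_nonneg δi)))
        (mul_nonneg (by rw [hwhat]; exact (Real.exp_pos _).le) (hψDnn _))
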